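/- Let R > e^e, A₁(t) = log(R/t) and A₂(t) = log(A₁(t)). Then for any h ∈ C¹_c((0,1]): ∫₀¹ |h'(t)|² t A₁(t) dt ≥ (1/4) ∫₀¹ |h(t)|² / (t A₁(t) A₂(t)²) dt − (1/2) A₂(1)^{-1} h(1)². -/

import Mathlib

open MeasureTheory Real Set

private lemma hR_pos' {R : ℝ} (hR : Real.exp (Real.exp 1) < R) : 0 < R :=
  lt_trans (Real.exp_pos _) hR

private lemma logRt_gt {R t : ℝ} (hR : Real.exp (Real.exp 1) < R) (ht : 0 < t) (ht1 : t ≤ 1) :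
    Real.exp 1 < Real.log (R / t) := by
  rw [Real.lt_log_iff_exp_lt (by have := hR_pos' hR; positivity)]
  calc Real.exp (Real.exp 1) < R := hR
    _ ≤ R / t := le_div_self (hR_pos' hR).le ht ht1

private lemma loglog_gt {R t : ℝ} (hR : Real.exp (Real.exp 1) < R) (ht : 0 < t) (ht1 : t ≤ 1) :
    1 < Real.log (Real.log (R / t)) := by
  calc (1:ℝ) = Real.log (Real.exp 1) := (Real.log_exp 1).symm
    _ < Real.log (Real.log (R / t)) := Real.log_lt_log (Real.exp_pos 1) (logRt_gt hR ht ht1)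

private lemma hasDerivAt_G {R t : ℝ} (hR : Real.exp (Real.exp 1) < R) (ht : 0 < t) (ht1 : t ≤ 1) :
    HasDerivAt (fun s => (Real.log (Real.log (R / s)))⁻¹)
      (1 / (t * Real.log (R / t) * (Real.log (Real.log (R / t))) ^ 2)) t := by
  have hA1 : 0 < Real.log (R / t) := lt_trans (Real.exp_pos 1) (logRt_gt hR ht ht1)
  have hA2 : 0 < Real.log (Real.log (R / t)) := lt_trans one_pos (loglog_gt hR ht ht1)
  have hR0 : (0:ℝ) < R := hR_pos' hR
  have h1 : HasDerivAt (fun s : ℝ => R / s) (R * -(t ^ 2)⁻¹) t :=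
    (hasDerivAt_inv ht.ne').const_mul R
  have h2 : HasDerivAt (fun s => Real.log (R / s)) (R * -(t ^ 2)⁻¹ / (R / t)) t :=
    h1.log (by positivity)
  have h3 : HasDerivAt (fun s => Real.log (Real.log (R / s)))
      (R * -(t ^ 2)⁻¹ / (R / t) / Real.log (R / t)) t := h2.log hA1.ne'
  have h4 : HasDerivAt (fun s => (Real.log (Real.log (R / s)))⁻¹) _ t := h3.inv hA2.ne'
  convert h4 using 1
  field_simp

/-- One dimensional doubly-logarithmic Hardy inequality with boundary term. -/
theorem loglog_hardy_one (R : ℝ) (hR : Real.exp (Real.exp 1) < R)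
    (h : ℝ → ℝ) (hh : ContDiff ℝ 1 h) (h0 : ∃ a > (0:ℝ), ∀ t < a, h t = 0) :
    ∫ t in Ioc (0:ℝ) 1, |deriv h t| ^ 2 * t * Real.log (R / t) ≥
      (1/4) * (∫ t in Ioc (0:ℝ) 1,
          (h t) ^ 2 / (t * Real.log (R / t) * (Real.log (Real.log (R / t))) ^ 2))
        - (1/2) * (Real.log (Real.log R))⁻¹ * (h 1) ^ 2 := by
  obtain ⟨a, ha, hzero⟩ := h0
  have hR0 : (0:ℝ) < R := hR_pos' hR
  set c : ℝ := min a 1 / 2 with hc_def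
  have hmin : 0 < min a 1 := lt_min ha one_pos
  have hc0 : 0 < c := by positivity
  have hca : c < a := lt_of_lt_of_le (by simp only [hc_def]; linarith) (min_le_left a 1)
  have hc1 : c ≤ 1 := by
    have := min_le_right a 1
    simp only [hc_def]; linarith
  have hh0 : ∀ t ≤ c, h t = 0 := fun t htc => hzero t (lt_of_le_of_lt htc hca)
  have hd0 : ∀ t ≤ c, deriv h t = 0 := by
    intro t htc
    have hev : h =ᶠ[nhds t] fun _ => (0:ℝ) :=
      Filter.eventuallyEq_of_mem (Iio_mem_nhds (lt_of_le_of_lt htc hca)) fun x hx => hzero x hx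
    rw [hev.deriv_eq]; simp
  have hcont : Continuous h := hh.continuous
  have hcontd : Continuous (deriv h) := hh.continuous_deriv le_rfl
  have hIcc : ∀ x ∈ Icc c 1, 0 < x ∧ x ≤ 1 := fun x hx => ⟨lt_of_lt_of_le hc0 hx.1, hx.2⟩
  have hA1pos : ∀ x ∈ Icc c 1, 0 < Real.log (R / x) := fun x hx =>
    lt_trans (Real.exp_pos 1) (logRt_gt hR (hIcc x hx).1 (hIcc x hx).2)
  have hA2pos : ∀ x ∈ Icc c 1, 0 < Real.log (Real.log (R / x)) := fun x hx =>
    lt_trans one_pos (loglog_gt hR (hIcc x hx).1 (hIcc x hx).2)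
  -- continuity facts
  have hA1c : ContinuousOn (fun t => Real.log (R / t)) (Icc c 1) := by
    apply ContinuousOn.log
    · exact continuousOn_const.div continuousOn_id fun x hx => (hIcc x hx).1.ne'
    · intro x hx
      have := (hIcc x hx).1
      positivity
  have hA2c : ContinuousOn (fun t => Real.log (Real.log (R / t))) (Icc c 1) :=
    hA1c.log fun x hx => (hA1pos x hx).ne'
  have hGc : ContinuousOn (fun t => (Real.log (Real.log (R / t)))⁻¹) (Icc c 1) :=
    hA2c.inv₀ fun x hx => (hA2pos x hx).ne'
  have hG'c : ContinuousOn
      (fun t => 1 / (t * Real.log (R / t) * (Real.log (Real.log (R / t))) ^ 2)) (Icc c 1) := by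
    apply continuousOn_const.div ((continuousOn_id.mul hA1c).mul (hA2c.pow 2))
    intro x hx
    have h1 := (hIcc x hx).1
    have h2 := hA1pos x hx
    have h3 := hA2pos x hx
    show x * Real.log (R / x) * (Real.log (Real.log (R / x))) ^ 2 ≠ 0
    positivity
  have huIcc : uIcc c 1 = Icc c 1 := uIcc_of_le hc1
  -- integrability
  have hF1c : ContinuousOn (fun x => (deriv h x) ^ 2 * x * Real.log (R / x)) (Icc c 1) :=
    (((hcontd.pow 2).continuousOn.mul continuousOn_id).mul hA1c)
  have hF2c : ContinuousOn
      (fun x => (h x) ^ 2 * (1 / (x * Real.log (R / x) * (Real.log (Real.log (R / x))) ^ 2)))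
      (Icc c 1) := (hcont.pow 2).continuousOn.mul hG'c
  have hF3c : ContinuousOn
      (fun x => 2 * h x * deriv h x * (Real.log (Real.log (R / x)))⁻¹) (Icc c 1) :=
    (((continuousOn_const.mul hcont.continuousOn).mul hcontd.continuousOn).mul hGc)
  have hF1i : IntervalIntegrable (fun x => (deriv h x) ^ 2 * x * Real.log (R / x)) volume c 1 :=
    (hF1c.mono (by rw [huIcc])).intervalIntegrable
  have hF2i : IntervalIntegrable
      (fun x => (h x) ^ 2 * (1 / (x * Real.log (R / x) * (Real.log (Real.log (R / x))) ^ 2)))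
      volume c 1 := (hF2c.mono (by rw [huIcc])).intervalIntegrable
  have hF3i : IntervalIntegrable
      (fun x => 2 * h x * deriv h x * (Real.log (Real.log (R / x)))⁻¹) volume c 1 :=
    (hF3c.mono (by rw [huIcc])).intervalIntegrable
  -- integration by parts
  have hu : ∀ x ∈ uIcc c 1, HasDerivAt (fun y => h y ^ 2) (2 * h x * deriv h x) x := by
    intro x _
    have hx := (hh.differentiable one_ne_zero).differentiableAt (x := x) |>.hasDerivAt
    simpa using hx.fun_pow 2
  have hv : ∀ x ∈ uIcc c 1, HasDerivAt (fun s => (Real.log (Real.log (R / s)))⁻¹)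
      (1 / (x * Real.log (R / x) * (Real.log (Real.log (R / x))) ^ 2)) x := by
    intro x hx
    rw [huIcc] at hx
    exact hasDerivAt_G hR (hIcc x hx).1 (hIcc x hx).2
  have hu'i : IntervalIntegrable (fun x => 2 * h x * deriv h x) volume c 1 :=
    ((continuous_const.mul hcont).mul hcontd).intervalIntegrable c 1
  have hv'i : IntervalIntegrable
      (fun x => 1 / (x * Real.log (R / x) * (Real.log (Real.log (R / x))) ^ 2)) volume c 1 :=
    (hG'c.mono (by rw [huIcc])).intervalIntegrable
  have hibp := intervalIntegral.integral_deriv_mul_eq_sub hu hv hu'i hv'i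
  rw [hh0 c le_rfl, div_one] at hibp
  have hzz : (0:ℝ) ^ 2 * (Real.log (Real.log (R / c)))⁻¹ = 0 := by norm_num
  rw [hzz, sub_zero] at hibp
  -- split the IBP integral
  rw [intervalIntegral.integral_add hF3i hF2i] at hibp
  -- pointwise AM-GM bound
  have hpt : ∀ x ∈ Icc c 1,
      -(2 * h x * deriv h x * (Real.log (Real.log (R / x)))⁻¹) ≤
        (1/2) * ((h x) ^ 2 * (1 / (x * Real.log (R / x) * (Real.log (Real.log (R / x))) ^ 2)))
          + 2 * ((deriv h x) ^ 2 * x * Real.log (R / x)) := by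
    intro x hx
    have hxp := (hIcc x hx).1
    have h1 := hA1pos x hx
    have h2 := hA2pos x hx
    have key : (0:ℝ) ≤ (h x + 2 * deriv h x * (x * Real.log (R / x)) *
        Real.log (Real.log (R / x))) ^ 2 /
        (2 * (x * Real.log (R / x)) * (Real.log (Real.log (R / x))) ^ 2) := by positivity
    have expand : (h x + 2 * deriv h x * (x * Real.log (R / x)) *
        Real.log (Real.log (R / x))) ^ 2 /
        (2 * (x * Real.log (R / x)) * (Real.log (Real.log (R / x))) ^ 2)
        = (1/2) * ((h x) ^ 2 * (1 / (x * Real.log (R / x) * (Real.log (Real.log (R / x))) ^ 2)))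
          + 2 * ((deriv h x) ^ 2 * x * Real.log (R / x))
          + 2 * h x * deriv h x * (Real.log (Real.log (R / x)))⁻¹ := by
      field_simp
      ring
    rw [expand] at key
    linarith
  have hmono := intervalIntegral.integral_mono_on hc1
    (hF3i.neg)
    ((hF2i.const_mul (1/2)).add (hF1i.const_mul 2))
    hpt
  simp only [Pi.neg_apply] at hmono
  rw [intervalIntegral.integral_neg, intervalIntegral.integral_add
      (hF2i.const_mul (1/2)) (hF1i.const_mul 2),
    intervalIntegral.integral_const_mul, intervalIntegral.integral_const_mul] at hmono
  -- notation for the three integrals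
  set I1 := ∫ x in c..1, (h x) ^ 2 * (1 / (x * Real.log (R / x) * (Real.log (Real.log (R / x))) ^ 2)) with hI1
  set I2 := ∫ x in c..1, (deriv h x) ^ 2 * x * Real.log (R / x) with hI2
  set I3 := ∫ x in c..1, 2 * h x * deriv h x * (Real.log (Real.log (R / x)))⁻¹ with hI3
  -- key inequality: I2 ≥ 1/4 I1 - 1/2 (loglog R)⁻¹ h1²
  have hkey : I2 ≥ (1/4) * I1 - (1/2) * (Real.log (Real.log R))⁻¹ * (h 1) ^ 2 := by
    linarith
  -- convert the set integrals to interval integrals over (c,1]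
  have hsub : Ioc c 1 ⊆ Icc c 1 := Ioc_subset_Icc_self
  have hunion : Ioc (0:ℝ) c ∪ Ioc c 1 = Ioc (0:ℝ) 1 := Ioc_union_Ioc_eq_Ioc hc0.le hc1
  have hLHS : ∫ t in Ioc (0:ℝ) 1, |deriv h t| ^ 2 * t * Real.log (R / t) = I2 := by
    have heq : ∀ t : ℝ, |deriv h t| ^ 2 * t * Real.log (R / t)
        = (deriv h t) ^ 2 * t * Real.log (R / t) := by intro t; rw [sq_abs]
    simp only [heq]
    rw [← hunion, setIntegral_union (Ioc_disjoint_Ioc_of_le le_rfl) measurableSet_Ioc]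
    · have hz : EqOn (fun t => (deriv h t) ^ 2 * t * Real.log (R / t)) 0 (Ioc (0:ℝ) c) := by
        intro x hx
        simp [hd0 x hx.2]
      rw [setIntegral_congr_fun measurableSet_Ioc hz]
      simp only [Pi.zero_apply, integral_zero, zero_add]
      rw [hI2, intervalIntegral.integral_of_le hc1]
    · exact (integrableOn_zero.congr_fun (fun x hx => by simp [hd0 x hx.2]) measurableSet_Ioc)
    · exact (hF1c.integrableOn_Icc).mono_set hsub
  have hRHS : ∫ t in Ioc (0:ℝ) 1,
      (h t) ^ 2 / (t * Real.log (R / t) * (Real.log (Real.log (R / t))) ^ 2) = I1 := by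
    have heq : ∀ t : ℝ, (h t) ^ 2 / (t * Real.log (R / t) * (Real.log (Real.log (R / t))) ^ 2)
        = (h t) ^ 2 * (1 / (t * Real.log (R / t) * (Real.log (Real.log (R / t))) ^ 2)) := by
      intro t; rw [mul_one_div]
    simp only [heq]
    rw [← hunion, setIntegral_union (Ioc_disjoint_Ioc_of_le le_rfl) measurableSet_Ioc]
    · have hz : EqOn (fun t => (h t) ^ 2 *
          (1 / (t * Real.log (R / t) * (Real.log (Real.log (R / t))) ^ 2))) 0 (Ioc (0:ℝ) c) := by
        intro x hx
        simp [hh0 x hx.2]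
      rw [setIntegral_congr_fun measurableSet_Ioc hz]
      simp only [Pi.zero_apply, integral_zero, zero_add]
      rw [hI1, intervalIntegral.integral_of_le hc1]
    · exact (integrableOn_zero.congr_fun (fun x hx => by simp [hh0 x hx.2]) measurableSet_Ioc)
    · exact (hF2c.integrableOn_Icc).mono_set hsub
  rw [hLHS, hRHS]
  exact hkey
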